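/- In the discrete diffusion-with-label model, the label is conditionally independent of the noisier state given the less-noisy state and the history: for every i with 1 ≤ i ≤ T, every a, b ∈ S, h ∈ H, c ∈ C such that the marginals P(x i = b, x (i−1) = a, h) > 0 and P(x (i−1) = a, h) > 0, one has P(c ∣ x i = b, x (i−1) = a, h) = P(c ∣ x (i−1) = a, h); in particular the left-hand side does not depend on b. -/
import Mathlib


open Finset

/-- Joint probability mass function of the discrete diffusion-with-label model. -/
noncomputable def P {H S C : Type*} [Fintype S] (T : ℕ)
    (pi : H → ℝ) (rho : H → S → ℝ) (lab : H → S → C → ℝ) (kappa : S → S → ℝ)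
    (h : H) (x : Fin (T + 1) → S) (c : C) : ℝ :=
  pi h * rho h (x 0) * lab h (x 0) c * ∏ i : Fin T, kappa (x i.castSucc) (x i.succ)

lemma P_snoc {H S C : Type*} [Fintype S] (T : ℕ)
    (pi : H → ℝ) (rho : H → S → ℝ) (lab : H → S → C → ℝ) (kappa : S → S → ℝ)
    (h : H) (y : Fin (T + 1) → S) (s : S) (c : C) :
    P (T + 1) pi rho lab kappa h (Fin.snoc y s) c
      = P T pi rho lab kappa h y c * kappa (y (Fin.last T)) s := by
  unfold P
  rw [Fin.prod_univ_castSucc]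
  have h0 : (Fin.snoc y s : Fin (T + 2) → S) 0 = y 0 := by
    rw [show (0 : Fin (T + 2)) = Fin.castSucc 0 by simp, Fin.snoc_castSucc]
  rw [h0]
  have hprod : ∀ j : Fin T,
      kappa ((Fin.snoc y s : Fin (T+2) → S) j.castSucc.castSucc)
        ((Fin.snoc y s : Fin (T+2) → S) j.castSucc.succ)
      = kappa (y j.castSucc) (y j.succ) := by
    intro j
    rw [Fin.snoc_castSucc, Fin.succ_castSucc, Fin.snoc_castSucc]
  rw [Finset.prod_congr rfl fun j _ => hprod j]
  rw [Fin.snoc_castSucc, Fin.succ_last, Fin.snoc_last]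
  ring

lemma sum_snoc {S : Type*} [Fintype S] (n : ℕ) (g : (Fin (n + 1) → S) → ℝ) :
    ∑ x : Fin (n + 1) → S, g x = ∑ y : Fin n → S, ∑ s : S, g (Fin.snoc y s) := by
  rw [← Equiv.sum_comp (Fin.snocEquiv (fun _ : Fin (n + 1) => S)) g,
    Fintype.sum_prod_type, Finset.sum_comm]
  simp [Fin.snocEquiv]

lemma collapse {H S C : Type*} [Fintype S] (T : ℕ)
    (pi : H → ℝ) (rho : H → S → ℝ) (lab : H → S → C → ℝ) (kappa : S → S → ℝ)
    (hks : ∀ a, ∑ b, kappa a b = 1) (h : H) (c : C)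
    (pred : (Fin (T + 1) → S) → Prop) [DecidablePred pred] :
    ∑ y : Fin (T + 1) → S, ∑ s : S,
        (if pred y then P T pi rho lab kappa h y c * kappa (y (Fin.last T)) s else 0)
      = ∑ y : Fin (T + 1) → S, if pred y then P T pi rho lab kappa h y c else 0 := by
  refine Finset.sum_congr rfl fun y _ => ?_
  by_cases hy : pred y
  · simp [hy, ← Finset.mul_sum, hks]
  · simp [hy]

lemma key {H S C : Type*} [Fintype S] [DecidableEq S]
    (pi : H → ℝ) (rho : H → S → ℝ) (lab : H → S → C → ℝ) (kappa : S → S → ℝ)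
    (hks : ∀ a, ∑ b, kappa a b = 1)
    (i : ℕ) (hi1 : 1 ≤ i) (a b : S) (h : H) (c : C)
    (T : ℕ) (hi2 : i ≤ T) :
    (∑ x ∈ univ.filter (fun x : Fin (T + 1) → S =>
        x ⟨i, by omega⟩ = b ∧ x ⟨i - 1, by omega⟩ = a), P T pi rho lab kappa h x c)
      = kappa a b * ∑ x ∈ univ.filter (fun x : Fin (T + 1) → S =>
          x ⟨i - 1, by omega⟩ = a), P T pi rho lab kappa h x c := by
  obtain ⟨k, rfl⟩ : ∃ k, i = k + 1 := ⟨i - 1, by omega⟩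
  induction T, hi2 using Nat.le_induction with
  | base =>
    conv_lhs => rw [Finset.sum_filter, sum_snoc]
    conv_rhs => rw [Finset.sum_filter, sum_snoc]
    have e1 : ∀ (y : Fin (k + 1) → S) (s : S),
        (Fin.snoc y s : Fin (k + 2) → S) ⟨k + 1, by omega⟩ = s := fun y s => by
      rw [show (⟨k + 1, by omega⟩ : Fin (k + 2)) = Fin.last (k + 1) from rfl, Fin.snoc_last]
    have e2 : ∀ (y : Fin (k + 1) → S) (s : S),
        (Fin.snoc y s : Fin (k + 2) → S) ⟨k + 1 - 1, by omega⟩ = y (Fin.last k) :=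
      fun y s => by
        rw [show (⟨k + 1 - 1, by omega⟩ : Fin (k + 2)) = Fin.castSucc (Fin.last k) from rfl,
          Fin.snoc_castSucc]
    simp only [e1, e2, P_snoc]
    rw [Finset.mul_sum]
    refine Finset.sum_congr rfl fun y _ => ?_
    by_cases hy : y (Fin.last k) = a
    · simp only [hy, and_true, if_true]
      rw [Finset.sum_ite_eq' Finset.univ b, if_pos (Finset.mem_univ b), ← Finset.mul_sum,
        hks, mul_one]
      ring
    · simp [hy]
  | succ T hT IH =>
    conv_lhs => rw [Finset.sum_filter, sum_snoc]
    conv_rhs => rw [Finset.sum_filter, sum_snoc]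
    have e1 : ∀ (y : Fin (T + 1) → S) (s : S),
        (Fin.snoc y s : Fin (T + 2) → S) ⟨k + 1, by omega⟩ = y ⟨k + 1, by omega⟩ :=
      fun y s => by
        rw [show (⟨k + 1, by omega⟩ : Fin (T + 2))
            = Fin.castSucc (⟨k + 1, by omega⟩ : Fin (T + 1)) from rfl, Fin.snoc_castSucc]
    have e2 : ∀ (y : Fin (T + 1) → S) (s : S),
        (Fin.snoc y s : Fin (T + 2) → S) ⟨k + 1 - 1, by omega⟩ = y ⟨k + 1 - 1, by omega⟩ :=
      fun y s => by
        rw [show (⟨k + 1 - 1, by omega⟩ : Fin (T + 2))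
            = Fin.castSucc (⟨k + 1 - 1, by omega⟩ : Fin (T + 1)) from rfl, Fin.snoc_castSucc]
    simp only [e1, e2, P_snoc]
    rw [collapse _ pi rho lab kappa hks h c, collapse _ pi rho lab kappa hks h c,
      ← Finset.sum_filter, ← Finset.sum_filter, IH, Finset.mul_sum]


/-- The label is conditionally independent of the noisier state given the less-noisy
state and the history: `P(c ∣ x i = b, x (i−1) = a, h) = P(c ∣ x (i−1) = a, h)`. -/
theorem label_indep_of_noisier_state {H S C : Type*} [Fintype H] [Fintype S] [Fintype C]
    [Nonempty H] [Nonempty S] [Nonempty C] [DecidableEq S]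
    (T : ℕ) (hT : 1 ≤ T)
    (pi : H → ℝ) (rho : H → S → ℝ) (lab : H → S → C → ℝ) (kappa : S → S → ℝ)
    (hpi : ∀ h, 0 ≤ pi h) (hpis : ∑ h, pi h = 1)
    (hrho : ∀ h s, 0 ≤ rho h s) (hrhos : ∀ h, ∑ s, rho h s = 1)
    (hlab : ∀ h s c, 0 ≤ lab h s c) (hlabs : ∀ h s, ∑ c, lab h s c = 1)
    (hk : ∀ a b, 0 ≤ kappa a b) (hks : ∀ a, ∑ b, kappa a b = 1)
    (i : ℕ) (hi1 : 1 ≤ i) (hi2 : i ≤ T) (a b : S) (h : H) (c : C)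
    (hpos1 : 0 < ∑ c' : C, ∑ x ∈ univ.filter (fun x : Fin (T + 1) → S =>
        x ⟨i, by omega⟩ = b ∧ x ⟨i - 1, by omega⟩ = a), P T pi rho lab kappa h x c')
    (hpos2 : 0 < ∑ c' : C, ∑ x ∈ univ.filter (fun x : Fin (T + 1) → S =>
        x ⟨i - 1, by omega⟩ = a), P T pi rho lab kappa h x c') :
    (∑ x ∈ univ.filter (fun x : Fin (T + 1) → S =>
        x ⟨i, by omega⟩ = b ∧ x ⟨i - 1, by omega⟩ = a), P T pi rho lab kappa h x c) /
      (∑ c' : C, ∑ x ∈ univ.filter (fun x : Fin (T + 1) → S =>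
        x ⟨i, by omega⟩ = b ∧ x ⟨i - 1, by omega⟩ = a), P T pi rho lab kappa h x c') =
    (∑ x ∈ univ.filter (fun x : Fin (T + 1) → S => x ⟨i - 1, by omega⟩ = a),
        P T pi rho lab kappa h x c) /
      (∑ c' : C, ∑ x ∈ univ.filter (fun x : Fin (T + 1) → S => x ⟨i - 1, by omega⟩ = a),
        P T pi rho lab kappa h x c') := by
  have hkey : ∀ c' : C,
      (∑ x ∈ univ.filter (fun x : Fin (T + 1) → S =>
          x ⟨i, by omega⟩ = b ∧ x ⟨i - 1, by omega⟩ = a), P T pi rho lab kappa h x c')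
        = kappa a b * ∑ x ∈ univ.filter (fun x : Fin (T + 1) → S =>
            x ⟨i - 1, by omega⟩ = a), P T pi rho lab kappa h x c' :=
    fun c' => key pi rho lab kappa hks i hi1 a b h c' T hi2
  rw [hkey c, Finset.sum_congr rfl fun c' _ => hkey c', ← Finset.mul_sum]
  have hk0 : kappa a b ≠ 0 := by
    intro h0
    rw [Finset.sum_congr rfl fun c' _ => hkey c', ← Finset.mul_sum, h0, zero_mul] at hpos1
    exact lt_irrefl 0 hpos1
  rw [mul_div_mul_left _ _ hk0]
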